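/- Let (p, l) be an independent and infinitesimally rigid affine-normalized realization of an incidence structure S = (P, L, I), meaning the only self-stress is zero and the space of infinitesimal flexes has dimension 8. Then: (a) if i₁, i₂ ∈ P are distinct with p i₁ ≠ p i₂ and m ∈ ℝ² satisfies ⟪p i₁, m⟫ = ⟪p i₂, m⟫ = -1 with m ≠ l j for every j ∈ L, the realization of the extended structure obtained by adjoining a new line j₀ with l j₀ = m and incidences (i₁, j₀), (i₂, j₀) is again independent and infinitesimally rigid (its flex space has dimension 8); and (b) dually, if j₁, j₂ ∈ L are distinct with l j₁ ≠ l j₂ and q ∈ ℝ² satisfies ⟪q, l j₁⟫ = ⟪q, l j₂⟫ = -1 with q ≠ p i for every i ∈ P, the realization obtained by adjoining a new point i₀ with p i₀ = q and incidences (i₀, j₁), (i₀, j₂) is again independent and infinitesimally rigid. -/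

import Mathlib

open Matrix

/-- The space of infinitesimal flexes of an affine-normalized realization
`(p, l)` of an incidence structure with incidence set `I`: pairs `(p', l')`
with `⟪p i, l' j⟫ + ⟪p' i, l j⟫ = 0` for every incidence `(i, j) ∈ I`. -/
def flexSpace {P L : Type*} (I : Set (P × L))
    (p : P → Fin 2 → ℝ) (l : L → Fin 2 → ℝ) :
    Submodule ℝ ((P → Fin 2 → ℝ) × (L → Fin 2 → ℝ)) where
  carrier := {x | ∀ ij ∈ I, p ij.1 ⬝ᵥ x.2 ij.2 + x.1 ij.1 ⬝ᵥ l ij.2 = 0}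
  add_mem' := by
    intro a b ha hb ij hij
    have h1 := ha ij hij
    have h2 := hb ij hij
    simp only [Prod.fst_add, Prod.snd_add, Pi.add_apply, dotProduct_add,
      add_dotProduct] at *
    linarith
  zero_mem' := by
    intro ij hij
    simp
  smul_mem' := by
    intro c a ha ij hij
    have h1 := ha ij hij
    simp only [Prod.smul_fst, Prod.smul_snd, Pi.smul_apply, dotProduct_smul,
      smul_dotProduct, smul_eq_mul] at *
    linear_combination c * h1

lemma pairIndep (u w m : Fin 2 → ℝ) (hm1 : u ⬝ᵥ m = -1) (hm2 : w ⬝ᵥ m = -1)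
    (hp : u ≠ w) : ∀ a b : ℝ, a • u + b • w = 0 → a = 0 ∧ b = 0 := by
  intro a b h
  have hm := congrArg (· ⬝ᵥ m) h
  simp only [add_dotProduct, smul_dotProduct, smul_eq_mul, hm1, hm2, zero_dotProduct] at hm
  have hb : b = -a := by linarith
  subst hb
  have h' : a • (u - w) = 0 := by
    rw [smul_sub]
    rw [neg_smul] at h
    linear_combination (norm := module) h
  rcases smul_eq_zero.mp h' with ha | huw
  · exact ⟨ha, by rw [ha, neg_zero]⟩
  · exact absurd (sub_eq_zero.mp huw) hp

lemma pairSurj (u w m : Fin 2 → ℝ) (hm1 : u ⬝ᵥ m = -1) (hm2 : w ⬝ᵥ m = -1)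
    (hp : u ≠ w) : ∀ a b : ℝ, ∃ v : Fin 2 → ℝ, u ⬝ᵥ v = a ∧ w ⬝ᵥ v = b := by
  have hpi := pairIndep u w m hm1 hm2 hp
  set d : ℝ := u 0 * w 1 - u 1 * w 0 with hd
  have hd0 : d ≠ 0 := by
    intro h0
    have h1 : (w 1) • u + (-(u 1)) • w = 0 := by
      funext k
      fin_cases k
      · show w 1 * u 0 + -(u 1) * w 0 = 0
        linarith [h0]
      · show w 1 * u 1 + -(u 1) * w 1 = 0
        ring
    have h2 : (-(w 0)) • u + (u 0) • w = 0 := by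
      funext k
      fin_cases k
      · show -(w 0) * u 0 + u 0 * w 0 = 0
        ring
      · show -(w 0) * u 1 + u 0 * w 1 = 0
        linarith [h0]
    obtain ⟨-, hu1⟩ := hpi _ _ h1
    obtain ⟨-, hu0⟩ := hpi _ _ h2
    have hu : u = 0 := by
      funext k; fin_cases k
      · simpa using hu0
      · simpa using neg_eq_zero.mp hu1
    rw [hu] at hm1
    simp at hm1
  intro a b
  refine ⟨![d⁻¹ * (a * w 1 - b * u 1), d⁻¹ * (b * u 0 - a * w 0)], ?_, ?_⟩ <;>
  · simp only [dotProduct, Fin.sum_univ_two, Matrix.cons_val_zero, Matrix.cons_val_one,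
      Matrix.head_cons]
    field_simp
    ring

lemma extIndep_a {P L : Type*} [Fintype P] [Fintype L] (I : Set (P × L))
    (p : P → Fin 2 → ℝ) (l : L → Fin 2 → ℝ)
    (hindep : ∀ ω : P × L → ℝ, (∀ ij ∉ I, ω ij = 0) →
      (∀ j, ∑ i, ω (i, j) • p i = 0) → (∀ i, ∑ j, ω (i, j) • l j = 0) → ω = 0)
    (i₁ i₂ : P) (h12 : i₁ ≠ i₂) (hp : p i₁ ≠ p i₂)
    (m : Fin 2 → ℝ) (hm1 : p i₁ ⬝ᵥ m = -1) (hm2 : p i₂ ⬝ᵥ m = -1) :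
    ∀ ω : P × Option L → ℝ,
      (∀ ij ∉ ({ij : P × Option L | ∃ q ∈ I, ij = (q.1, some q.2)} ∪
        {(i₁, (none : Option L)), (i₂, (none : Option L))}), ω ij = 0) →
      (∀ j : Option L, ∑ i, ω (i, j) • p i = 0) →
      (∀ i, ∑ j : Option L, ω (i, j) • (j.elim m l) = 0) →
      ω = 0 := by
  classical
  intro ω hsupp hcol hrow
  have hvan : ∀ i : P, i ≠ i₁ → i ≠ i₂ → ω (i, none) = 0 := by
    intro i h1 h2
    apply hsupp
    rintro (⟨q, hq, heq⟩ | h | h)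
    · simp at heq
    · exact h1 (congrArg Prod.fst h)
    · exact h2 (congrArg Prod.fst (Set.mem_singleton_iff.mp h))
  have hnone : ω (i₁, none) = 0 ∧ ω (i₂, none) = 0 := by
    have h0 := hcol none
    have hsub : ∑ i ∈ ({i₁, i₂} : Finset P), ω (i, none) • p i
        = ∑ i, ω (i, none) • p i := by
      apply Finset.sum_subset (Finset.subset_univ _)
      intro i _ hi
      simp only [Finset.mem_insert, Finset.mem_singleton, not_or] at hi
      rw [hvan i hi.1 hi.2, zero_smul]
    rw [h0, Finset.sum_pair h12] at hsub
    exact pairIndep _ _ m hm1 hm2 hp _ _ hsub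
  have hzero : ∀ i : P, ω (i, none) = 0 := by
    intro i
    by_cases h1 : i = i₁
    · rw [h1]; exact hnone.1
    by_cases h2 : i = i₂
    · rw [h2]; exact hnone.2
    · exact hvan i h1 h2
  have hres : (fun ij : P × L => ω (ij.1, some ij.2)) = 0 := by
    apply hindep
    · intro ij hij
      apply hsupp
      rintro (⟨q, hq, heq⟩ | h | h)
      · simp only [Prod.mk.injEq] at heq
        have : ij = q := Prod.ext heq.1 (Option.some_injective _ heq.2)
        exact hij (this ▸ hq)
      · simp at h
      · simp at h
    · intro j
      exact hcol (some j)
    · intro i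
      have h0 := hrow i
      rw [Fintype.sum_option] at h0
      rw [hzero i, zero_smul, zero_add] at h0
      exact h0
  funext ij
  obtain ⟨i, j⟩ := ij
  cases j with
  | none => exact hzero i
  | some j => exact congrFun hres (i, j)

lemma extIndep_b {P L : Type*} [Fintype P] [Fintype L] (I : Set (P × L))
    (p : P → Fin 2 → ℝ) (l : L → Fin 2 → ℝ)
    (hindep : ∀ ω : P × L → ℝ, (∀ ij ∉ I, ω ij = 0) →
      (∀ j, ∑ i, ω (i, j) • p i = 0) → (∀ i, ∑ j, ω (i, j) • l j = 0) → ω = 0)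
    (j₁ j₂ : L) (h12 : j₁ ≠ j₂) (hl : l j₁ ≠ l j₂)
    (q : Fin 2 → ℝ) (hq1 : q ⬝ᵥ l j₁ = -1) (hq2 : q ⬝ᵥ l j₂ = -1) :
    ∀ ω : Option P × L → ℝ,
      (∀ ij ∉ ({ij : Option P × L | ∃ r ∈ I, ij = (some r.1, r.2)} ∪
        {((none : Option P), j₁), ((none : Option P), j₂)}), ω ij = 0) →
      (∀ j : L, ∑ i : Option P, ω (i, j) • (i.elim q p) = 0) →
      (∀ i : Option P, ∑ j, ω (i, j) • l j = 0) →
      ω = 0 := by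
  classical
  intro ω hsupp hrow hcol
  have hvan : ∀ j : L, j ≠ j₁ → j ≠ j₂ → ω (none, j) = 0 := by
    intro j h1 h2
    apply hsupp
    rintro (⟨r, hr, heq⟩ | h | h)
    · simp at heq
    · exact h1 (congrArg Prod.snd h)
    · exact h2 (congrArg Prod.snd (Set.mem_singleton_iff.mp h))
  have hnone : ω (none, j₁) = 0 ∧ ω (none, j₂) = 0 := by
    have h0 := hcol none
    have hsub : ∑ j ∈ ({j₁, j₂} : Finset L), ω (none, j) • l j
        = ∑ j, ω (none, j) • l j := by
      apply Finset.sum_subset (Finset.subset_univ _)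
      intro j _ hj
      simp only [Finset.mem_insert, Finset.mem_singleton, not_or] at hj
      rw [hvan j hj.1 hj.2, zero_smul]
    rw [h0, Finset.sum_pair h12] at hsub
    exact pairIndep _ _ q (by rw [dotProduct_comm]; exact hq1)
      (by rw [dotProduct_comm]; exact hq2) hl _ _ hsub
  have hzero : ∀ j : L, ω (none, j) = 0 := by
    intro j
    by_cases h1 : j = j₁
    · rw [h1]; exact hnone.1
    by_cases h2 : j = j₂
    · rw [h2]; exact hnone.2
    · exact hvan j h1 h2
  have hres : (fun ij : P × L => ω (some ij.1, ij.2)) = 0 := by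
    apply hindep
    · intro ij hij
      apply hsupp
      rintro (⟨r, hr, heq⟩ | h | h)
      · simp only [Prod.mk.injEq] at heq
        have : ij = r := Prod.ext (Option.some_injective _ heq.1) heq.2
        exact hij (this ▸ hr)
      · simp at h
      · simp at h
    · intro j
      have h0 := hrow j
      rw [Fintype.sum_option] at h0
      rw [hzero j, zero_smul, zero_add] at h0
      exact h0
    · intro i
      exact hcol (some i)
  funext ij
  obtain ⟨i, j⟩ := ij
  cases i with
  | none => exact hzero j
  | some i => exact congrFun hres (i, j)

set_option synthInstance.maxHeartbeats 1000000 in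
set_option maxHeartbeats 1000000 in
lemma extRank_a {P L : Type*} [Fintype P] [Fintype L] (I : Set (P × L))
    (p : P → Fin 2 → ℝ) (l : L → Fin 2 → ℝ)
    (hrigid : Module.finrank ℝ (flexSpace I p l) = 8)
    (i₁ i₂ : P) (hp : p i₁ ≠ p i₂)
    (m : Fin 2 → ℝ) (hm1 : p i₁ ⬝ᵥ m = -1) (hm2 : p i₂ ⬝ᵥ m = -1) :
    Module.finrank ℝ (flexSpace
      ({ij : P × Option L | ∃ q ∈ I, ij = (q.1, some q.2)} ∪
        {(i₁, (none : Option L)), (i₂, (none : Option L))})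
      p (fun j : Option L => j.elim m l)) = 8 := by
  classical
  set F := flexSpace I p l with hF
  set J : Set (P × Option L) := ({ij : P × Option L | ∃ q ∈ I, ij = (q.1, some q.2)} ∪
        {(i₁, (none : Option L)), (i₂, (none : Option L))}) with hJ
  set N := flexSpace J p (fun j : Option L => j.elim m l) with hN
  set ψ : (F × (Fin 2 → ℝ)) →ₗ[ℝ] ℝ × ℝ :=
    { toFun := fun x => (p i₁ ⬝ᵥ x.2 + x.1.val.1 i₁ ⬝ᵥ m,
                         p i₂ ⬝ᵥ x.2 + x.1.val.1 i₂ ⬝ᵥ m)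
      map_add' := by
        intro a b
        simp only [Prod.snd_add, Prod.fst_add, Submodule.coe_add, Pi.add_apply,
          dotProduct_add, add_dotProduct, Prod.mk_add_mk, Prod.mk.injEq]
        constructor <;> ring
      map_smul' := by
        intro c a
        simp only [Prod.smul_snd, Prod.smul_fst, SetLike.val_smul, Pi.smul_apply,
          dotProduct_smul, smul_dotProduct, smul_eq_mul, RingHom.id_apply,
          Prod.smul_mk, Prod.mk.injEq]
        constructor <;> ring } with hψ
  have e : N ≃ₗ[ℝ] LinearMap.ker ψ := by
    refine
      { toFun := fun x => ⟨(⟨(x.val.1, fun j => x.val.2 (some j)), ?_⟩, x.val.2 none), ?_⟩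
        map_add' := ?_
        map_smul' := ?_
        invFun := fun y => ⟨(y.1.1.val.1, fun j : Option L => j.elim y.1.2 y.1.1.val.2), ?_⟩
        left_inv := ?_
        right_inv := ?_ }
    · -- membership in F
      intro ij hij
      exact x.2 (ij.1, some ij.2) (Or.inl ⟨ij, hij, rfl⟩)
    · -- membership in ker ψ
      have h1 := x.2 (i₁, none) (Or.inr (Set.mem_insert _ _))
      have h2 := x.2 (i₂, none) (Or.inr (Set.mem_insert_of_mem _ rfl))
      exact LinearMap.mem_ker.mpr (Prod.ext h1 h2)
    · -- map_add
      intro a b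
      apply Subtype.ext
      apply Prod.ext
      · apply Subtype.ext; rfl
      · rfl
    · -- map_smul
      intro c a
      apply Subtype.ext
      apply Prod.ext
      · apply Subtype.ext; rfl
      · rfl
    · -- membership in N
      intro ij hij
      rcases hij with ⟨q, hq, heq⟩ | h | h
      · subst heq
        exact y.1.1.2 q hq
      · subst h
        exact congrArg Prod.fst (LinearMap.mem_ker.mp y.2)
      · rw [Set.mem_singleton_iff.mp h]
        exact congrArg Prod.snd (LinearMap.mem_ker.mp y.2)
    · -- left_inv
      intro x
      apply Subtype.ext
      apply Prod.ext
      · rfl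
      · funext j; cases j <;> rfl
    · -- right_inv
      intro y
      apply Subtype.ext
      apply Prod.ext
      · apply Subtype.ext; rfl
      · rfl
  have hsurj : Function.Surjective ψ := by
    rintro ⟨a, b⟩
    obtain ⟨v, hv1, hv2⟩ := pairSurj (p i₁) (p i₂) m hm1 hm2 hp a b
    refine ⟨(0, v), ?_⟩
    simp only [hψ, LinearMap.coe_mk, AddHom.coe_mk, ZeroMemClass.coe_zero,
      Prod.fst_zero, Pi.zero_apply, zero_dotProduct, add_zero, hv1, hv2]
  have hrn := LinearMap.finrank_range_add_finrank_ker ψ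
  have h1 : Module.finrank ℝ ↥(LinearMap.range ψ) = 2 := by
    rw [LinearMap.range_eq_top.mpr hsurj, finrank_top]
    simp
  have hdom : Module.finrank ℝ (↥F × (Fin 2 → ℝ)) = 10 := by
    rw [Module.finrank_prod, hrigid]
    norm_num
  rw [h1, hdom] at hrn
  have efr : Module.finrank ℝ ↥N = Module.finrank ℝ ↥(LinearMap.ker ψ) :=
    LinearEquiv.finrank_eq e
  rw [efr]
  omega

set_option synthInstance.maxHeartbeats 1000000 in
set_option maxHeartbeats 1000000 in
lemma extRank_b {P L : Type*} [Fintype P] [Fintype L] (I : Set (P × L))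
    (p : P → Fin 2 → ℝ) (l : L → Fin 2 → ℝ)
    (hrigid : Module.finrank ℝ (flexSpace I p l) = 8)
    (j₁ j₂ : L) (hl : l j₁ ≠ l j₂)
    (q : Fin 2 → ℝ) (hq1 : q ⬝ᵥ l j₁ = -1) (hq2 : q ⬝ᵥ l j₂ = -1) :
    Module.finrank ℝ (flexSpace
      ({ij : Option P × L | ∃ r ∈ I, ij = (some r.1, r.2)} ∪
        {((none : Option P), j₁), ((none : Option P), j₂)})
      (fun i : Option P => i.elim q p) l) = 8 := by
  classical
  set F := flexSpace I p l with hF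
  set J : Set (Option P × L) := ({ij : Option P × L | ∃ r ∈ I, ij = (some r.1, r.2)} ∪
        {((none : Option P), j₁), ((none : Option P), j₂)}) with hJ
  set N := flexSpace J (fun i : Option P => i.elim q p) l with hN
  set ψ : (F × (Fin 2 → ℝ)) →ₗ[ℝ] ℝ × ℝ :=
    { toFun := fun x => (q ⬝ᵥ x.1.val.2 j₁ + x.2 ⬝ᵥ l j₁,
                         q ⬝ᵥ x.1.val.2 j₂ + x.2 ⬝ᵥ l j₂)
      map_add' := by
        intro a b
        simp only [Prod.snd_add, Prod.fst_add, Submodule.coe_add, Pi.add_apply,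
          dotProduct_add, add_dotProduct, Prod.mk_add_mk, Prod.mk.injEq]
        constructor <;> ring
      map_smul' := by
        intro c a
        simp only [Prod.smul_snd, Prod.smul_fst, SetLike.val_smul, Pi.smul_apply,
          dotProduct_smul, smul_dotProduct, smul_eq_mul, RingHom.id_apply,
          Prod.smul_mk, Prod.mk.injEq]
        constructor <;> ring } with hψ
  have e : N ≃ₗ[ℝ] LinearMap.ker ψ := by
    refine
      { toFun := fun x => ⟨(⟨(fun i => x.val.1 (some i), x.val.2), ?_⟩, x.val.1 none), ?_⟩
        map_add' := ?_
        map_smul' := ?_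
        invFun := fun y => ⟨(fun i : Option P => i.elim y.1.2 y.1.1.val.1, y.1.1.val.2), ?_⟩
        left_inv := ?_
        right_inv := ?_ }
    · -- membership in F
      intro ij hij
      exact x.2 (some ij.1, ij.2) (Or.inl ⟨ij, hij, rfl⟩)
    · -- membership in ker ψ
      have h1 := x.2 (none, j₁) (Or.inr (Set.mem_insert _ _))
      have h2 := x.2 (none, j₂) (Or.inr (Set.mem_insert_of_mem _ rfl))
      exact LinearMap.mem_ker.mpr (Prod.ext h1 h2)
    · -- map_add
      intro a b
      apply Subtype.ext
      apply Prod.ext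
      · apply Subtype.ext; rfl
      · rfl
    · -- map_smul
      intro c a
      apply Subtype.ext
      apply Prod.ext
      · apply Subtype.ext; rfl
      · rfl
    · -- membership in N
      intro ij hij
      rcases hij with ⟨r, hr, heq⟩ | h | h
      · subst heq
        exact y.1.1.2 r hr
      · subst h
        exact congrArg Prod.fst (LinearMap.mem_ker.mp y.2)
      · rw [Set.mem_singleton_iff.mp h]
        exact congrArg Prod.snd (LinearMap.mem_ker.mp y.2)
    · -- left_inv
      intro x
      apply Subtype.ext
      apply Prod.ext
      · funext i; cases i <;> rfl
      · rfl
    · -- right_inv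
      intro y
      apply Subtype.ext
      apply Prod.ext
      · apply Subtype.ext; rfl
      · rfl
  have hsurj : Function.Surjective ψ := by
    rintro ⟨a, b⟩
    obtain ⟨v, hv1, hv2⟩ := pairSurj (l j₁) (l j₂) q
      (by rw [dotProduct_comm]; exact hq1) (by rw [dotProduct_comm]; exact hq2) hl a b
    refine ⟨(0, v), ?_⟩
    simp only [hψ, LinearMap.coe_mk, AddHom.coe_mk, ZeroMemClass.coe_zero,
      Prod.snd_zero, Pi.zero_apply, dotProduct_zero, zero_add]
    rw [dotProduct_comm v (l j₁), dotProduct_comm v (l j₂), hv1, hv2]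
  have hrn := LinearMap.finrank_range_add_finrank_ker ψ
  have h1 : Module.finrank ℝ ↥(LinearMap.range ψ) = 2 := by
    rw [LinearMap.range_eq_top.mpr hsurj, finrank_top]
    simp
  have hdom : Module.finrank ℝ (↥F × (Fin 2 → ℝ)) = 10 := by
    rw [Module.finrank_prod, hrigid]
    norm_num
  rw [h1, hdom] at hrn
  have efr : Module.finrank ℝ ↥N = Module.finrank ℝ ↥(LinearMap.ker ψ) :=
    LinearEquiv.finrank_eq e
  rw [efr]
  omega

/-- 0-extensions preserve independence and infinitesimal rigidity.
(a) adjoining a new line through two distinct points of an independent and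
infinitesimally rigid affine-normalized realization (flex space of dimension 8)
gives again an independent and infinitesimally rigid realization; (b) dually for
adjoining a new point on two distinct lines. -/
theorem zero_extension_independent_infRigid
    {P L : Type*} [Fintype P] [Fintype L] (I : Set (P × L))
    (p : P → Fin 2 → ℝ) (l : L → Fin 2 → ℝ)
    (hreal : ∀ ij ∈ I, p ij.1 ⬝ᵥ l ij.2 = -1)
    (hindep : ∀ ω : P × L → ℝ, (∀ ij ∉ I, ω ij = 0) →
      (∀ j, ∑ i, ω (i, j) • p i = 0) → (∀ i, ∑ j, ω (i, j) • l j = 0) → ω = 0)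
    (hrigid : Module.finrank ℝ (flexSpace I p l) = 8) :
    (∀ (i₁ i₂ : P), i₁ ≠ i₂ → p i₁ ≠ p i₂ →
      ∀ m : Fin 2 → ℝ, p i₁ ⬝ᵥ m = -1 → p i₂ ⬝ᵥ m = -1 → (∀ j, m ≠ l j) →
      (∀ ω : P × Option L → ℝ,
        (∀ ij ∉ ({ij : P × Option L | ∃ q ∈ I, ij = (q.1, some q.2)} ∪
          {(i₁, (none : Option L)), (i₂, (none : Option L))}), ω ij = 0) →
        (∀ j : Option L, ∑ i, ω (i, j) • p i = 0) →
        (∀ i, ∑ j : Option L, ω (i, j) • (j.elim m l) = 0) →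
        ω = 0) ∧
      Module.finrank ℝ (flexSpace
        ({ij : P × Option L | ∃ q ∈ I, ij = (q.1, some q.2)} ∪
          {(i₁, (none : Option L)), (i₂, (none : Option L))})
        p (fun j : Option L => j.elim m l)) = 8) ∧
    (∀ (j₁ j₂ : L), j₁ ≠ j₂ → l j₁ ≠ l j₂ →
      ∀ q : Fin 2 → ℝ, q ⬝ᵥ l j₁ = -1 → q ⬝ᵥ l j₂ = -1 → (∀ i, q ≠ p i) →
      (∀ ω : Option P × L → ℝ,
        (∀ ij ∉ ({ij : Option P × L | ∃ r ∈ I, ij = (some r.1, r.2)} ∪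
          {((none : Option P), j₁), ((none : Option P), j₂)}), ω ij = 0) →
        (∀ j : L, ∑ i : Option P, ω (i, j) • (i.elim q p) = 0) →
        (∀ i : Option P, ∑ j, ω (i, j) • l j = 0) →
        ω = 0) ∧
      Module.finrank ℝ (flexSpace
        ({ij : Option P × L | ∃ r ∈ I, ij = (some r.1, r.2)} ∪
          {((none : Option P), j₁), ((none : Option P), j₂)})
        (fun i : Option P => i.elim q p) l) = 8) := by
  constructor
  · intro i₁ i₂ h12 hp m hm1 hm2 _
    exact ⟨extIndep_a I p l hindep i₁ i₂ h12 hp m hm1 hm2,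
      extRank_a I p l hrigid i₁ i₂ hp m hm1 hm2⟩
  · intro j₁ j₂ h12 hl q hq1 hq2 _
    exact ⟨extIndep_b I p l hindep j₁ j₂ h12 hl q hq1 hq2,
      extRank_b I p l hrigid j₁ j₂ hl q hq1 hq2⟩
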